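/- Let t, s be integers and n a positive integer such that t, s and n have no common prime factor (i.e., gcd(gcd(t,s), n) = 1). Let S be the set of prime numbers ℓ dividing n such that ℓ does not divide t·s (as integers). Then the number of units x of ℤ/nℤ such that t·x + s is again a unit of ℤ/nℤ, multiplied by ∏_{ℓ∈S}(ℓ−1), equals φ(n)·∏_{ℓ∈S}(ℓ−2), where φ is Euler's totient function. Equivalently, the proportion of units x with t·x+s a unit is ∏_{ℓ∈S}(ℓ−2)/(ℓ−1). -/

import Mathlib

open Finset

private noncomputable def Ncard (t s : ℤ) (n : ℕ) : ℕ :=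
  Nat.card {x : ZMod n // IsUnit x ∧ IsUnit ((t : ZMod n) * x + (s : ZMod n))}

private lemma Ncard_one (t s : ℤ) : Ncard t s 1 = 1 := by
  unfold Ncard
  have : Subsingleton {x : ZMod 1 // IsUnit x ∧ IsUnit ((t : ZMod 1) * x + (s : ZMod 1))} :=
    ⟨fun a b => Subtype.ext (Subsingleton.elim _ _)⟩
  have hne : Nonempty {x : ZMod 1 // IsUnit x ∧ IsUnit ((t : ZMod 1) * x + (s : ZMod 1))} :=
    ⟨⟨0, isUnit_of_subsingleton _, isUnit_of_subsingleton _⟩⟩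
  exact Nat.card_eq_one_iff_unique.mpr ⟨this, hne⟩

private lemma Ncard_mul (t s : ℤ) {m n : ℕ} (hm : 0 < m) (hn : 0 < n) (h : m.Coprime n) :
    Ncard t s (m * n) = Ncard t s m * Ncard t s n := by
  haveI : NeZero m := ⟨hm.ne'⟩
  haveI : NeZero n := ⟨hn.ne'⟩
  let e := ZMod.chineseRemainder h
  have key : ∀ x : ZMod (m * n),
      (IsUnit x ∧ IsUnit ((t : ZMod (m * n)) * x + (s : ZMod (m * n)))) ↔
      ((IsUnit (e x).1 ∧ IsUnit ((t : ZMod m) * (e x).1 + (s : ZMod m))) ∧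
       (IsUnit (e x).2 ∧ IsUnit ((t : ZMod n) * (e x).2 + (s : ZMod n)))) := by
    intro x
    have hu : ∀ y : ZMod (m * n), IsUnit y ↔ (IsUnit (e y).1 ∧ IsUnit (e y).2) := by
      intro y
      constructor
      · intro hy
        have := hy.map e.toRingHom
        rw [RingEquiv.toRingHom_eq_coe] at this
        exact ⟨this.map (RingHom.fst _ _), this.map (RingHom.snd _ _)⟩
      · rintro ⟨h1, h2⟩
        have : IsUnit (e y) := by
          refine ⟨MulEquiv.prodUnits.symm (h1.unit, h2.unit), ?_⟩
          show ((h1.unit : ZMod m), (h2.unit : ZMod n)) = e y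
          ext <;> simp
        have := this.map e.symm.toRingHom
        rwa [RingEquiv.toRingHom_eq_coe, RingEquiv.coe_toRingHom, RingEquiv.symm_apply_apply]
          at this
    have hmap : e ((t : ZMod (m * n)) * x + (s : ZMod (m * n))) =
        ((t : ZMod m) * (e x).1 + (s : ZMod m), (t : ZMod n) * (e x).2 + (s : ZMod n)) := by
      rw [map_add, map_mul, map_intCast, map_intCast]
      ext <;> simp
    rw [hu x, hu ((t : ZMod (m * n)) * x + (s : ZMod (m * n))), hmap]
    constructor
    · rintro ⟨⟨a, b⟩, c, d⟩; exact ⟨⟨a, c⟩, ⟨b, d⟩⟩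
    · rintro ⟨⟨a, c⟩, b, d⟩; exact ⟨⟨a, b⟩, c, d⟩
  unfold Ncard
  rw [← Nat.card_prod]
  apply Nat.card_congr
  exact ((Equiv.subtypeEquiv e.toEquiv (fun x => by simpa using key x)).trans
    (Equiv.subtypeProdEquivProd))

private lemma card_isUnit (n : ℕ) [NeZero n] :
    Nat.card {x : ZMod n // IsUnit x} = n.totient := by
  rw [← ZMod.card_units_eq_totient n, ← Nat.card_eq_fintype_card]
  apply Nat.card_congr
  exact ⟨fun x => x.2.unit, fun u => ⟨u, u.isUnit⟩,
    fun x => Subtype.ext (by simp), fun u => Units.ext (by simp)⟩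

/-- Unit criterion in `ZMod (p^k)` via reduction mod `p`. -/
private lemma isUnit_iff_res {p k : ℕ} (hp : p.Prime) (hk : 0 < k) (x : ZMod (p ^ k)) :
    IsUnit x ↔ (ZMod.castHom (dvd_pow_self p hk.ne') (ZMod p)) x ≠ 0 := by
  haveI : NeZero (p ^ k) := ⟨(pow_pos hp.pos k).ne'⟩
  have hv : IsUnit x ↔ Nat.Coprime x.val (p ^ k) := by
    conv_lhs => rw [← ZMod.natCast_zmod_val x]
    exact ZMod.isUnit_iff_coprime _ _
  have hres : (ZMod.castHom (dvd_pow_self p hk.ne') (ZMod p)) x = ((x.val : ℕ) : ZMod p) := by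
    conv_lhs => rw [← ZMod.natCast_zmod_val x]
    exact map_natCast _ x.val
  rw [hv, hres, Ne, ZMod.natCast_eq_zero_iff,
    Nat.coprime_pow_right_iff hk, Nat.coprime_comm, hp.coprime_iff_not_dvd]

private lemma fiber_card {p k : ℕ} [NeZero (p ^ k)] (hp : p.Prime) (hk : 0 < k) (c : ZMod p) :
    (univ.filter
      (fun x : ZMod (p ^ k) => ZMod.castHom (dvd_pow_self p hk.ne') (ZMod p) x = c)).card
      = p ^ (k - 1) := by
  haveI : NeZero (p ^ k) := ⟨(pow_pos hp.pos k).ne'⟩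
  haveI : NeZero p := ⟨hp.pos.ne'⟩
  set π := ZMod.castHom (dvd_pow_self p hk.ne') (ZMod p) with hπ
  have hconst : ∀ c : ZMod p,
      (univ.filter (fun x : ZMod (p ^ k) => π x = c)).card =
      (univ.filter (fun x : ZMod (p ^ k) => π x = 0)).card := by
    intro c
    have hd : π ((c.val : ZMod (p ^ k))) = c := by
      rw [map_natCast, ZMod.natCast_zmod_val]
    apply Finset.card_bij' (fun x _ => x - (c.val : ZMod (p ^ k)))
      (fun x _ => x + (c.val : ZMod (p ^ k)))
    · intro a ha
      simp only [mem_filter, mem_univ, true_and] at ha ⊢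
      rw [map_sub, ha, hd, sub_self]
    · intro a ha
      simp only [mem_filter, mem_univ, true_and] at ha ⊢
      rw [map_add, ha, hd, zero_add]
    · intro a _; ring
    · intro a _; ring
  have hsum : (univ : Finset (ZMod (p ^ k))).card =
      ∑ c : ZMod p, (univ.filter (fun x : ZMod (p ^ k) => π x = c)).card :=
    Finset.card_eq_sum_card_fiberwise (fun x _ => mem_univ (π x))
  simp only [hconst] at hsum
  simp only [Finset.sum_const, Finset.card_univ, ZMod.card, smul_eq_mul] at hsum
  have hpk : p ^ k = p * p ^ (k - 1) := by
    conv_lhs => rw [← Nat.succ_pred_eq_of_pos hk]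
    rw [pow_succ, mul_comm, Nat.pred_eq_sub_one]
  rw [hconst c]
  exact Nat.eq_of_mul_eq_mul_left hp.pos (hsum.symm.trans hpk)

private lemma Ncard_pp_dvd (t s : ℤ) {p k : ℕ} (hp : p.Prime) (hk : 0 < k)
    (hgcd : Nat.gcd (Int.gcd t s) (p ^ k) = 1) (hdvd : (p : ℤ) ∣ t * s) :
    Ncard t s (p ^ k) = Nat.totient (p ^ k) := by
  haveI : NeZero (p ^ k) := ⟨(pow_pos hp.pos k).ne'⟩
  haveI : Fact p.Prime := ⟨hp⟩
  have hng : ¬ ((p : ℤ) ∣ t ∧ (p : ℤ) ∣ s) := by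
    rintro ⟨h1, h2⟩
    have hpg : p ∣ Int.gcd t s := Int.ofNat_dvd.mp (by exact_mod_cast Int.dvd_gcd h1 h2)
    have hd1 : p ∣ Nat.gcd (Int.gcd t s) (p ^ k) := Nat.dvd_gcd hpg (dvd_pow_self p hk.ne')
    rw [hgcd] at hd1
    exact hp.ne_one (Nat.dvd_one.mp hd1)
  have hprime : Prime (p : ℤ) := Nat.prime_iff_prime_int.mp hp
  have himp : ∀ x : ZMod (p ^ k), IsUnit x →
      IsUnit ((t : ZMod (p ^ k)) * x + (s : ZMod (p ^ k))) := by
    intro x hx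
    rw [isUnit_iff_res hp hk] at hx ⊢
    rw [map_add, map_mul, map_intCast]
    rcases hprime.dvd_mul.mp hdvd with h | h
    · have ht : ((t : ZMod p)) = 0 := (ZMod.intCast_zmod_eq_zero_iff_dvd _ _).mpr h
      have hs : ((s : ZMod p)) ≠ 0 := fun h0 =>
        hng ⟨h, (ZMod.intCast_zmod_eq_zero_iff_dvd _ _).mp h0⟩
      simpa [ht] using hs
    · have hs0 : ((s : ZMod p)) = 0 := (ZMod.intCast_zmod_eq_zero_iff_dvd _ _).mpr h
      have ht : ((t : ZMod p)) ≠ 0 := fun h0 =>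
        hng ⟨(ZMod.intCast_zmod_eq_zero_iff_dvd _ _).mp h0, h⟩
      simpa [hs0] using mul_ne_zero ht hx
  unfold Ncard
  rw [← card_isUnit (p ^ k)]
  exact Nat.card_congr (Equiv.subtypeEquivRight fun x =>
    ⟨fun h => h.1, fun h => ⟨h, himp x h⟩⟩)

private lemma Ncard_pp_not_dvd (t s : ℤ) {p k : ℕ} (hp : p.Prime) (hk : 0 < k)
    (hdvd : ¬ (p : ℤ) ∣ t * s) :
    Ncard t s (p ^ k) = p ^ k - 2 * p ^ (k - 1) := by
  haveI : NeZero (p ^ k) := ⟨(pow_pos hp.pos k).ne'⟩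
  haveI : Fact p.Prime := ⟨hp⟩
  set π := ZMod.castHom (dvd_pow_self p hk.ne') (ZMod p) with hπ
  have ht : (t : ZMod p) ≠ 0 := fun h =>
    hdvd (Dvd.dvd.mul_right ((ZMod.intCast_zmod_eq_zero_iff_dvd _ _).mp h) s)
  have hs : (s : ZMod p) ≠ 0 := fun h =>
    hdvd (Dvd.dvd.mul_left ((ZMod.intCast_zmod_eq_zero_iff_dvd _ _).mp h) t)
  set a : ZMod p := (t : ZMod p)⁻¹ * (-(s : ZMod p)) with ha
  have ha0 : a ≠ 0 := mul_ne_zero (inv_ne_zero ht) (neg_ne_zero.mpr hs)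
  have hcond : ∀ x : ZMod (p ^ k),
      (IsUnit x ∧ IsUnit ((t : ZMod (p ^ k)) * x + (s : ZMod (p ^ k)))) ↔
      (π x ≠ 0 ∧ π x ≠ a) := by
    intro x
    rw [isUnit_iff_res hp hk, isUnit_iff_res hp hk]
    refine and_congr Iff.rfl ?_
    rw [map_add, map_mul, map_intCast, map_intCast]
    have key : ((t : ZMod p) * π x + (s : ZMod p) = 0) ↔ π x = a := by
      rw [ha, eq_inv_mul_iff_mul_eq₀ ht, add_eq_zero_iff_eq_neg]
    exact not_congr key
  unfold Ncard
  rw [Nat.card_eq_fintype_card, Fintype.card_subtype]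
  have hset : (univ.filter (fun x : ZMod (p ^ k) =>
      IsUnit x ∧ IsUnit ((t : ZMod (p ^ k)) * x + (s : ZMod (p ^ k))))) =
      univ \ ((univ.filter (fun x : ZMod (p ^ k) => π x = 0)) ∪
        (univ.filter (fun x : ZMod (p ^ k) => π x = a))) := by
    ext x
    simp only [mem_filter, mem_univ, true_and, mem_sdiff, mem_union, not_or]
    exact (hcond x).trans Iff.rfl
  rw [hset, card_sdiff_of_subset (subset_univ _), card_union_of_disjoint, fiber_card hp hk,
    fiber_card hp hk, card_univ, ZMod.card, two_mul]
  rw [Finset.disjoint_left]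
  intro x hx hx'
  simp only [mem_filter, mem_univ, true_and] at hx hx'
  exact ha0 (hx'.symm.trans hx)

private lemma key_pp (t s : ℤ) {p k : ℕ} (hp : p.Prime) (hk : 0 < k)
    (hgcd : Nat.gcd (Int.gcd t s) (p ^ k) = 1) :
    Ncard t s (p ^ k) *
        ∏ ℓ ∈ (p ^ k).primeFactors.filter (fun ℓ : ℕ => ¬ ((ℓ : ℤ) ∣ t * s)), (ℓ - 1) =
      Nat.totient (p ^ k) *
        ∏ ℓ ∈ (p ^ k).primeFactors.filter (fun ℓ : ℕ => ¬ ((ℓ : ℤ) ∣ t * s)), (ℓ - 2) := by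
  rw [Nat.primeFactors_prime_pow hk.ne' hp]
  by_cases hd : (p : ℤ) ∣ t * s
  · rw [filter_singleton, if_neg (by simpa using hd)]
    simpa using Ncard_pp_dvd t s hp hk hgcd hd
  · rw [filter_singleton, if_pos (by simpa using hd), prod_singleton, prod_singleton,
      Ncard_pp_not_dvd t s hp hk hd, Nat.totient_prime_pow hp hk]
    have e1 : p ^ k - 2 * p ^ (k - 1) = (p - 2) * p ^ (k - 1) := by
      rw [Nat.sub_mul]
      congr 1
      rw [← pow_succ', Nat.sub_add_cancel hk]
    rw [e1]
    ring

theorem stmt_4 (t s : ℤ) (n : ℕ) (hn : 0 < n)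
    (hgcd : Nat.gcd (Int.gcd t s) n = 1) :
    Nat.card {x : ZMod n // IsUnit x ∧ IsUnit ((t : ZMod n) * x + (s : ZMod n))} *
        ∏ ℓ ∈ n.primeFactors.filter (fun ℓ : ℕ => ¬ ((ℓ : ℤ) ∣ t * s)), (ℓ - 1) =
      Nat.totient n *
        ∏ ℓ ∈ n.primeFactors.filter (fun ℓ : ℕ => ¬ ((ℓ : ℤ) ∣ t * s)), (ℓ - 2) := by
  have main : ∀ m : ℕ, 0 < m → Nat.gcd (Int.gcd t s) m = 1 →
      Ncard t s m *
          ∏ ℓ ∈ m.primeFactors.filter (fun ℓ : ℕ => ¬ ((ℓ : ℤ) ∣ t * s)), (ℓ - 1) =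
        Nat.totient m *
          ∏ ℓ ∈ m.primeFactors.filter (fun ℓ : ℕ => ¬ ((ℓ : ℤ) ∣ t * s)), (ℓ - 2) := by
    intro m
    induction m using Nat.recOnPosPrimePosCoprime with
    | prime_pow p k hpp hkk => exact fun _ hg => key_pp t s hpp hkk hg
    | zero => exact fun h => absurd h (by simp)
    | one => intro _ _; simp [Ncard_one]
    | coprime a b ha hb hab iha ihb =>
      intro _ hg
      have hga : Nat.gcd (Int.gcd t s) a = 1 :=
        Nat.Coprime.coprime_dvd_right (dvd_mul_right a b) hg
      have hgb : Nat.gcd (Int.gcd t s) b = 1 :=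
        Nat.Coprime.coprime_dvd_right (dvd_mul_left b a) hg
      have h1 := iha (by omega) hga
      have h2 := ihb (by omega) hgb
      have hdisj : Disjoint (a.primeFactors.filter (fun ℓ : ℕ => ¬ ((ℓ : ℤ) ∣ t * s)))
          (b.primeFactors.filter (fun ℓ : ℕ => ¬ ((ℓ : ℤ) ∣ t * s))) :=
        Finset.disjoint_filter_filter (Nat.Coprime.disjoint_primeFactors hab)
      rw [Ncard_mul t s (by omega) (by omega) hab, Nat.totient_mul hab,
        Nat.primeFactors_mul (by omega : a ≠ 0) (by omega : b ≠ 0), filter_union,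
        prod_union hdisj, prod_union hdisj]
      calc Ncard t s a * Ncard t s b *
            ((∏ ℓ ∈ a.primeFactors.filter (fun ℓ : ℕ => ¬ ((ℓ : ℤ) ∣ t * s)), (ℓ - 1)) *
             (∏ ℓ ∈ b.primeFactors.filter (fun ℓ : ℕ => ¬ ((ℓ : ℤ) ∣ t * s)), (ℓ - 1)))
          = (Ncard t s a *
              ∏ ℓ ∈ a.primeFactors.filter (fun ℓ : ℕ => ¬ ((ℓ : ℤ) ∣ t * s)), (ℓ - 1)) *
            (Ncard t s b *
              ∏ ℓ ∈ b.primeFactors.filter (fun ℓ : ℕ => ¬ ((ℓ : ℤ) ∣ t * s)), (ℓ - 1)) := by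
            ring
        _ = (Nat.totient a *
              ∏ ℓ ∈ a.primeFactors.filter (fun ℓ : ℕ => ¬ ((ℓ : ℤ) ∣ t * s)), (ℓ - 2)) *
            (Nat.totient b *
              ∏ ℓ ∈ b.primeFactors.filter (fun ℓ : ℕ => ¬ ((ℓ : ℤ) ∣ t * s)), (ℓ - 2)) := by
            rw [h1, h2]
        _ = _ := by ring
  exact main n hn hgcd
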